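/- (Cancellation in the boundary variational term.) Let n ≥ 3 be an integer, ℓ > 0, β ∈ ℝ. Let m : (−ε,ε) → ℝ and φ : (a,b) × (−ε,ε) → (0,∞) be differentiable, set f(x,s) = β − 2m(s)/φ(x,s)^{n−2} − φ(x,s)²/ℓ², and assume f > 0 and ∂ₓφ = φ·√f everywhere (with ∂ₓ∂ₛφ = ∂ₛ∂ₓφ existing). Then for all (x,s), √(f)·φ^{n−3}·( (∂ₓ(f φ²)/(φ² f))·∂ₛφ − 2·∂ₓ∂ₛφ ) = 2·m'(s). In particular all terms involving ∂ₛφ cancel and the boundary variational expression reduces to the variation of the mass parameter alone. -/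

import Mathlib

/-- The Birmingham metric function, in terms of the areal radius `φ` and the
mass parameter `m`: `f = β − 2m/φ^(n−2) − φ²/ℓ²`. -/
noncomputable def birminghamF (n : ℕ) (ℓ β m φ : ℝ) : ℝ :=
  β - 2 * m / φ ^ (n - 2) - φ ^ 2 / ℓ ^ 2

private lemma alg_key (k : ℕ) (β ℓ M M' P S r Dv X : ℝ)
    (hP : 0 < P) (hℓ : ℓ ≠ 0) (hr : 0 < r)
    (hf : r ^ 2 = β - 2 * M / P ^ (k + 1) - P ^ 2 / ℓ ^ 2)
    (hDv : Dv = ((2 * M * ((k + 1 : ℕ) * P ^ k) / (P ^ (k + 1)) ^ 2 - 2 * P / ℓ ^ 2) * P ^ 2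
        + (β - 2 * M / P ^ (k + 1) - P ^ 2 / ℓ ^ 2) * (2 * P)) * (P * r))
    (hX : X = S * r + P * ((-(2 * M') / P ^ (k + 1)
        + 2 * M * ((k + 1 : ℕ) * P ^ k) * S / (P ^ (k + 1)) ^ 2 - 2 * P * S / ℓ ^ 2) / (2 * r))) :
    r * P ^ k * (Dv / (P ^ 2 * (β - 2 * M / P ^ (k + 1) - P ^ 2 / ℓ ^ 2)) * S - 2 * X) = 2 * M' := by
  subst hDv hX
  rw [← hf]
  have hP' : P ≠ 0 := hP.ne'
  have hr' : r ≠ 0 := hr.ne'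
  field_simp
  ring

/-- Cancellation in the boundary variational term: with `f = β − 2m(s)/φ^(n−2) − φ²/ℓ²`,
`f > 0` and `∂ₓφ = φ√f` (and equal mixed partials `∂ₓ∂ₛφ = ∂ₛ∂ₓφ`), one has
`√f·φ^(n−3)·( (∂ₓ(fφ²)/(φ²f))·∂ₛφ − 2·∂ₓ∂ₛφ ) = 2·m'(s)`: all terms involving
`∂ₛφ` cancel and the boundary term reduces to the variation of the mass alone. -/
theorem boundary_term_cancellation (n : ℕ) (hn : 3 ≤ n) (ℓ β a b ε : ℝ)
    (hℓ : 0 < ℓ) (hε : 0 < ε)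
    (m m' : ℝ → ℝ) (φ φs φxs D : ℝ → ℝ → ℝ)
    (hm : ∀ s ∈ Set.Ioo (-ε) ε, HasDerivAt m (m' s) s)
    (hφpos : ∀ x ∈ Set.Ioo a b, ∀ s ∈ Set.Ioo (-ε) ε, 0 < φ x s)
    (hfpos : ∀ x ∈ Set.Ioo a b, ∀ s ∈ Set.Ioo (-ε) ε,
      0 < birminghamF n ℓ β (m s) (φ x s))
    (hφx : ∀ x ∈ Set.Ioo a b, ∀ s ∈ Set.Ioo (-ε) ε,
      HasDerivAt (fun x => φ x s)
        (φ x s * Real.sqrt (birminghamF n ℓ β (m s) (φ x s))) x)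
    (hφs : ∀ x ∈ Set.Ioo a b, ∀ s ∈ Set.Ioo (-ε) ε,
      HasDerivAt (fun s => φ x s) (φs x s) s)
    (hmix₁ : ∀ x ∈ Set.Ioo a b, ∀ s ∈ Set.Ioo (-ε) ε,
      HasDerivAt (fun x => φs x s) (φxs x s) x)
    (hmix₂ : ∀ x ∈ Set.Ioo a b, ∀ s ∈ Set.Ioo (-ε) ε,
      HasDerivAt (fun s => φ x s * Real.sqrt (birminghamF n ℓ β (m s) (φ x s)))
        (φxs x s) s)
    (hD : ∀ x ∈ Set.Ioo a b, ∀ s ∈ Set.Ioo (-ε) ε,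
      HasDerivAt (fun x => birminghamF n ℓ β (m s) (φ x s) * (φ x s) ^ 2) (D x s) x) :
    ∀ x ∈ Set.Ioo a b, ∀ s ∈ Set.Ioo (-ε) ε,
      Real.sqrt (birminghamF n ℓ β (m s) (φ x s)) * (φ x s) ^ (n - 3) *
          (D x s / ((φ x s) ^ 2 * birminghamF n ℓ β (m s) (φ x s)) * φs x s
            - 2 * φxs x s)
        = 2 * m' s := by
  obtain ⟨k, rfl⟩ : ∃ k, n = k + 3 := ⟨n - 3, by omega⟩
  intro x hx s hs
  have h2 : k + 3 - 2 = k + 1 := rfl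
  have h3 : k + 3 - 3 = k := rfl
  set P := φ x s with hPdef
  set F := birminghamF (k + 3) ℓ β (m s) P with hFdef
  have hP : 0 < P := hφpos x hx s hs
  have hF : 0 < F := hfpos x hx s hs
  have hFval : F = β - 2 * m s / P ^ (k + 1) - P ^ 2 / ℓ ^ 2 := by
    rw [hFdef, birminghamF, h2]
  set r := Real.sqrt F with hrdef
  have hr : 0 < r := Real.sqrt_pos.mpr hF
  have hr2 : r ^ 2 = F := Real.sq_sqrt hF.le
  have hPne : P ≠ 0 := hP.ne'
  have hPk1 : P ^ (k + 1) ≠ 0 := pow_ne_zero _ hPne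
  have hℓ' : ℓ ≠ 0 := hℓ.ne'
  -- derivative of x ↦ φ x s
  have hdx : HasDerivAt (fun x => φ x s) (P * r) x := hφx x hx s hs
  -- value of D
  have hDval : D x s = ((2 * m s * ((k + 1 : ℕ) * P ^ k) / (P ^ (k + 1)) ^ 2 - 2 * P / ℓ ^ 2)
      * P ^ 2 + (β - 2 * m s / P ^ (k + 1) - P ^ 2 / ℓ ^ 2) * (2 * P)) * (P * r) := by
    have hu : HasDerivAt (fun y : ℝ => (β - 2 * m s / y ^ (k + 1) - y ^ 2 / ℓ ^ 2) * y ^ 2)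
        ((2 * m s * ((k + 1 : ℕ) * P ^ k) / (P ^ (k + 1)) ^ 2 - 2 * P / ℓ ^ 2) * P ^ 2
          + (β - 2 * m s / P ^ (k + 1) - P ^ 2 / ℓ ^ 2) * (2 * P)) P := by
      have hpow : HasDerivAt (fun y : ℝ => y ^ (k + 1)) ((k + 1 : ℕ) * P ^ k) P := by
        simpa using hasDerivAt_pow (k + 1) P
      have hdiv : HasDerivAt (fun y : ℝ => 2 * m s / y ^ (k + 1))
          ((0 * P ^ (k + 1) - 2 * m s * ((k + 1 : ℕ) * P ^ k)) / (P ^ (k + 1)) ^ 2) P :=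
        (hasDerivAt_const P (2 * m s)).div hpow hPk1
      have hsq : HasDerivAt (fun y : ℝ => y ^ 2) (2 * P) P := by
        simpa using hasDerivAt_pow 2 P
      have hfb : HasDerivAt (fun y : ℝ => β - 2 * m s / y ^ (k + 1) - y ^ 2 / ℓ ^ 2)
          (2 * m s * ((k + 1 : ℕ) * P ^ k) / (P ^ (k + 1)) ^ 2 - 2 * P / ℓ ^ 2) P := by
        have := ((hasDerivAt_const P β).fun_sub hdiv).fun_sub (hsq.div_const (ℓ ^ 2))
        refine this.congr_deriv ?_
        ring
      exact hfb.mul hsq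
    have hcomp : HasDerivAt (fun x => birminghamF (k + 3) ℓ β (m s) (φ x s) * (φ x s) ^ 2)
        (((2 * m s * ((k + 1 : ℕ) * P ^ k) / (P ^ (k + 1)) ^ 2 - 2 * P / ℓ ^ 2) * P ^ 2
          + (β - 2 * m s / P ^ (k + 1) - P ^ 2 / ℓ ^ 2) * (2 * P)) * (P * r)) x := by
      have := hu.comp x hdx
      simpa [birminghamF, h2, Function.comp_def] using this
    exact (hD x hx s hs).unique hcomp
  -- value of φxs
  have hXval : φxs x s = φs x s * r + P * ((-(2 * m' s) / P ^ (k + 1)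
      + 2 * m s * ((k + 1 : ℕ) * P ^ k) * (φs x s) / (P ^ (k + 1)) ^ 2
      - 2 * P * (φs x s) / ℓ ^ 2) / (2 * r)) := by
    have hds : HasDerivAt (fun s => φ x s) (φs x s) s := hφs x hx s hs
    have hpows : HasDerivAt (fun s => (φ x s) ^ (k + 1)) ((k + 1 : ℕ) * P ^ k * φs x s) s := by
      simpa using hds.fun_pow (k + 1)
    have hms : HasDerivAt (fun s => 2 * m s) (2 * m' s) s := (hm s hs).const_mul 2
    have hdiv : HasDerivAt (fun s => 2 * m s / (φ x s) ^ (k + 1))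
        ((2 * m' s * P ^ (k + 1) - 2 * m s * ((k + 1 : ℕ) * P ^ k * φs x s)) / (P ^ (k + 1)) ^ 2)
        s := hms.div hpows hPk1
    have hsq : HasDerivAt (fun s => (φ x s) ^ 2) (2 * P * φs x s) s := by
      simpa [mul_comm] using hds.fun_pow 2
    have hFs : HasDerivAt (fun s => birminghamF (k + 3) ℓ β (m s) (φ x s))
        (-(2 * m' s) / P ^ (k + 1)
          + 2 * m s * ((k + 1 : ℕ) * P ^ k) * (φs x s) / (P ^ (k + 1)) ^ 2
          - 2 * P * (φs x s) / ℓ ^ 2) s := by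
      have := ((hasDerivAt_const s β).fun_sub hdiv).fun_sub (hsq.div_const (ℓ ^ 2))
      have h2' : ∀ s', birminghamF (k + 3) ℓ β (m s') (φ x s')
          = β - 2 * m s' / (φ x s') ^ (k + 1) - (φ x s') ^ 2 / ℓ ^ 2 := by
        intro s'; rw [birminghamF, h2]
      simp only [h2']
      refine this.congr_deriv ?_
      field_simp
      ring
    have hsqrt : HasDerivAt (fun s => Real.sqrt (birminghamF (k + 3) ℓ β (m s) (φ x s)))
        ((-(2 * m' s) / P ^ (k + 1)
          + 2 * m s * ((k + 1 : ℕ) * P ^ k) * (φs x s) / (P ^ (k + 1)) ^ 2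
          - 2 * P * (φs x s) / ℓ ^ 2) / (2 * r)) s := by
      have h := (Real.hasDerivAt_sqrt hF.ne').comp s hFs
      simpa [Function.comp_def, hrdef, mul_comm, div_eq_mul_inv, mul_assoc] using h
    have hmul := hds.mul hsqrt
    have := (hmix₂ x hx s hs).unique hmul
    rw [this]
  exact alg_key k β ℓ (m s) (m' s) P (φs x s) r (D x s) (φxs x s) hP hℓ' hr
    (hr2.trans hFval) hDval hXval
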